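/- Let m, k be positive integers with m·e²/(k+1)! ≤ 1, L an n×n complex matrix with ‖L‖h ≤ 1, C = sup_{t∈[0,T]}‖exp(Lt)‖ where T = mh, and V_k = ∑_{i=0}^{k}(Lh)^i/i!. Then for all 1 ≤ j ≤ m, ‖V_k^j‖ ≤ C·(1 + (e−1)·j·e²/(k+1)!) ≤ 2·C·e. -/

import Mathlib

set_option maxHeartbeats 2000000

open NormedSpace

section Helpers
open scoped Matrix.Norms.L2Operator
open scoped Matrix.Norms.L2Operator
open NormedSpace

variable {n : ℕ}

lemma aux_norm_one (n : ℕ) : ‖(1 : Matrix (Fin n) (Fin n) ℂ)‖ ≤ 1 := by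
  rw [Matrix.cstar_norm_def, map_one]
  exact ContinuousLinearMap.norm_id_le

lemma aux_norm_pow (A : Matrix (Fin n) (Fin n) ℂ) (hA : ‖A‖ ≤ 1) (i : ℕ) :
    ‖A ^ i‖ ≤ 1 := by
  rcases Nat.eq_zero_or_pos i with rfl | hi
  · simpa using aux_norm_one n
  · calc ‖A ^ i‖ ≤ ‖A‖ ^ i := norm_pow_le' A hi
      _ ≤ 1 := pow_le_one₀ (norm_nonneg A) hA

lemma aux_term_norm (A : Matrix (Fin n) (Fin n) ℂ) (hA : ‖A‖ ≤ 1) (i : ℕ) :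
    ‖((i.factorial : ℂ)⁻¹) • A ^ i‖ ≤ ((i.factorial : ℝ))⁻¹ := by
  rw [norm_smul]
  have h1 : ‖((i.factorial : ℂ))⁻¹‖ = ((i.factorial : ℝ))⁻¹ := by
    rw [norm_inv]; norm_num
  rw [h1]
  have := aux_norm_pow A hA i
  have h2 : (0:ℝ) ≤ ((i.factorial : ℝ))⁻¹ := by positivity
  nlinarith [norm_nonneg (A ^ i)]

lemma aux_summable_inv_fact : Summable (fun i : ℕ => ((i.factorial : ℝ))⁻¹) := by
  simpa using Real.summable_pow_div_factorial 1

lemma aux_tsum_inv_fact : ∑' i : ℕ, ((i.factorial : ℝ))⁻¹ = Real.exp 1 := by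
  rw [Real.exp_eq_exp_ℝ, exp_eq_tsum ℝ]
  simp [smul_eq_mul]

lemma aux_norm_exp (A : Matrix (Fin n) (Fin n) ℂ) (hA : ‖A‖ ≤ 1) :
    ‖exp A‖ ≤ Real.exp 1 := by
  rw [exp_eq_tsum ℂ]
  calc ‖∑' i : ℕ, ((i.factorial : ℂ)⁻¹) • A ^ i‖
      ≤ ∑' i : ℕ, ‖((i.factorial : ℂ)⁻¹) • A ^ i‖ :=
        norm_tsum_le_tsum_norm (norm_expSeries_summable' A)
    _ ≤ ∑' i : ℕ, ((i.factorial : ℝ))⁻¹ :=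
        Summable.tsum_le_tsum (aux_term_norm A hA) (norm_expSeries_summable' A) aux_summable_inv_fact
    _ = Real.exp 1 := aux_tsum_inv_fact

-- remainder
lemma aux_remainder (k : ℕ) (A : Matrix (Fin n) (Fin n) ℂ) (hA : ‖A‖ ≤ 1) :
    ‖exp A - ∑ i ∈ Finset.range (k + 1), ((i.factorial : ℂ)⁻¹) • A ^ i‖ ≤
      Real.exp 1 / (k+1).factorial := by
  have hsum := expSeries_summable' (𝕂 := ℂ) A
  have hkey := Summable.sum_add_tsum_nat_add (f := fun i : ℕ => ((i.factorial : ℂ)⁻¹) • A ^ i) (k+1) hsum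
  rw [exp_eq_tsum ℂ]
  have hE : (∑' i : ℕ, ((i.factorial : ℂ)⁻¹) • A ^ i)
      - ∑ i ∈ Finset.range (k + 1), ((i.factorial : ℂ)⁻¹) • A ^ i
      = ∑' i : ℕ, (((i + (k+1)).factorial : ℂ)⁻¹) • A ^ (i + (k+1)) := by
    rw [← hkey, add_sub_cancel_left]
  rw [hE]
  have hnormsum : Summable fun i : ℕ => ‖(((i + (k+1)).factorial : ℂ)⁻¹) • A ^ (i + (k+1))‖ :=
    (summable_nat_add_iff (k+1)).2 (norm_expSeries_summable' A)
  have hbd : ∀ i : ℕ, ‖(((i + (k+1)).factorial : ℂ)⁻¹) • A ^ (i + (k+1))‖ ≤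
      ((k+1).factorial : ℝ)⁻¹ * ((i.factorial : ℝ))⁻¹ := by
    intro i
    calc ‖(((i + (k+1)).factorial : ℂ)⁻¹) • A ^ (i + (k+1))‖
        ≤ (((i + (k+1)).factorial : ℝ))⁻¹ := aux_term_norm A hA _
      _ ≤ ((k+1).factorial : ℝ)⁻¹ * ((i.factorial : ℝ))⁻¹ := by
          rw [← mul_inv]
          apply inv_anti₀
          · positivity
          · have h2 := Nat.le_of_dvd (Nat.factorial_pos _)
              (Nat.factorial_mul_factorial_dvd_factorial_add i (k+1))
            calc ((k+1).factorial : ℝ) * i.factorial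
                = ((i.factorial * (k+1).factorial : ℕ) : ℝ) := by push_cast; ring
              _ ≤ (((i + (k+1)).factorial : ℕ) : ℝ) := by exact_mod_cast h2
  have hsummable2 : Summable fun i : ℕ => ((k+1).factorial : ℝ)⁻¹ * ((i.factorial : ℝ))⁻¹ :=
    aux_summable_inv_fact.mul_left _
  calc ‖∑' i : ℕ, (((i + (k+1)).factorial : ℂ)⁻¹) • A ^ (i + (k+1))‖
      ≤ ∑' i : ℕ, ‖(((i + (k+1)).factorial : ℂ)⁻¹) • A ^ (i + (k+1))‖ :=
        norm_tsum_le_tsum_norm hnormsum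
    _ ≤ ∑' i : ℕ, ((k+1).factorial : ℝ)⁻¹ * ((i.factorial : ℝ))⁻¹ :=
        Summable.tsum_le_tsum hbd hnormsum hsummable2
    _ = ((k+1).factorial : ℝ)⁻¹ * Real.exp 1 := by rw [tsum_mul_left, aux_tsum_inv_fact]
    _ = Real.exp 1 / (k+1).factorial := by ring


lemma aux_pow_one_add_sub_one {M : Type*} [NormedRing M] (hone : ‖(1:M)‖ ≤ 1)
    (D : M) (δ : ℝ) (hδ0 : 0 ≤ δ) (hD : ‖D‖ ≤ δ) (j : ℕ) :
    ‖(1 + D)^j - 1‖ ≤ (1+δ)^j - 1 := by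
  have hM : (1 + D)^j - 1 = ∑ i ∈ Finset.range j, D^(i+1) * (j.choose (i+1) : M) := by
    rw [add_comm (1:M) D, Commute.add_pow (Commute.one_right D), Finset.sum_range_succ']
    simp [Finset.sum_range_succ']
  have hR : (1+δ)^j - 1 = ∑ i ∈ Finset.range j, δ^(i+1) * (j.choose (i+1) : ℝ) := by
    rw [add_comm (1:ℝ) δ, Commute.add_pow (Commute.one_right δ), Finset.sum_range_succ']
    simp [Finset.sum_range_succ']
  rw [hM, hR]
  refine (norm_sum_le _ _).trans (Finset.sum_le_sum fun i _ => ?_)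
  have hc : ‖((j.choose (i+1) : ℕ) : M)‖ ≤ (j.choose (i+1) : ℝ) := by
    have h1 : ((j.choose (i+1) : ℕ) : M) = (j.choose (i+1)) • (1:M) := by
      simp [nsmul_eq_mul]
    rw [h1]
    calc ‖(j.choose (i+1)) • (1:M)‖ ≤ (j.choose (i+1) : ℝ) * ‖(1:M)‖ := by
          simpa using (norm_nsmul_le : ‖(j.choose (i+1)) • (1:M)‖ ≤ _)
      _ ≤ (j.choose (i+1) : ℝ) * 1 := by
          exact mul_le_mul_of_nonneg_left hone (by positivity)
      _ = _ := mul_one _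
  calc ‖D^(i+1) * ((j.choose (i+1) : ℕ) : M)‖
      ≤ ‖D^(i+1)‖ * ‖((j.choose (i+1) : ℕ) : M)‖ := norm_mul_le _ _
    _ ≤ δ^(i+1) * (j.choose (i+1) : ℝ) := by
        refine mul_le_mul ((norm_pow_le' D (Nat.succ_pos i)).trans ?_) hc (norm_nonneg _)
          (by positivity)
        exact pow_le_pow_left₀ (norm_nonneg D) hD (i+1)
  
lemma aux_exp_le (x : ℝ) (hx0 : 0 ≤ x) (hx1 : x ≤ 1) :
    Real.exp x ≤ 1 + (Real.exp 1 - 1) * x := by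
  have := convexOn_exp.2 (Set.mem_univ (0:ℝ)) (Set.mem_univ (1:ℝ))
    (show (0:ℝ) ≤ 1 - x by linarith) hx0 (show (1-x) + x = 1 by ring)
  simp only [smul_eq_mul, mul_zero, mul_one, zero_add, Real.exp_zero] at this
  linarith

end Helpers


open scoped Matrix.Norms.L2Operator

/-- with `m·e²/(k+1)! ≤ 1`, `‖L‖h ≤ 1`, `T = m h` and
`C = sup_{t∈[0,T]}‖exp(Lt)‖`, the Taylor truncation `V_k = ∑_{i=0}^{k}(Lh)^i/i!`
satisfies `‖V_k^j‖ ≤ C(1 + (e−1)·j·e²/(k+1)!) ≤ 2Ce` for all `1 ≤ j ≤ m`. -/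
theorem norm_taylor_pow_le (n : ℕ) (L : Matrix (Fin n) (Fin n) ℂ)
    (h T : ℝ) (hh : 0 < h) (m k : ℕ) (hm : 0 < m) (hk : 0 < k)
    (hT : T = m * h) (hLh : ‖L‖ * h ≤ 1)
    (hmk : (m : ℝ) * Real.exp 1 ^ 2 / (k + 1).factorial ≤ 1)
    (C : ℝ)
    (hC : C = sSup ((fun t : ℝ => ‖NormedSpace.exp (t • L)‖) '' Set.Icc 0 T)) :
    ∀ j : ℕ, 1 ≤ j → j ≤ m →
      ‖(∑ i ∈ Finset.range (k + 1), ((i.factorial : ℂ)⁻¹) • (h • L) ^ i) ^ j‖ ≤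
          C * (1 + (Real.exp 1 - 1) * j * Real.exp 1 ^ 2 / (k + 1).factorial) ∧
        C * (1 + (Real.exp 1 - 1) * j * Real.exp 1 ^ 2 / (k + 1).factorial) ≤
          2 * C * Real.exp 1 := by
  intro j hj1 hjm
  set A : Matrix (Fin n) (Fin n) ℂ := h • L with hA_def
  have hA : ‖A‖ ≤ 1 := by
    rw [hA_def, norm_smul, Real.norm_eq_abs, abs_of_pos hh]
    linarith [mul_comm ‖L‖ h]
  set V : Matrix (Fin n) (Fin n) ℂ :=
    ∑ i ∈ Finset.range (k + 1), ((i.factorial : ℂ)⁻¹) • A ^ i with hV_def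
  -- commutation
  have hcommVA : Commute V A := by
    refine Finset.sum_induction _ (fun x => Commute x A) (fun a b => Commute.add_left)
      (Commute.zero_left A) (fun i _ => ?_)
    exact ((Commute.refl A).pow_left i).smul_left _
  have hcommVe : Commute V (exp (-A)) := (hcommVA.neg_right).exp_right
  have hexp1 : exp A * exp (-A) = 1 := by
    rw [← Matrix.exp_add_of_commute A (-A) ((Commute.refl A).neg_right), add_neg_cancel, exp_zero]
  -- key factorization
  set W : Matrix (Fin n) (Fin n) ℂ := V * exp (-A) with hW_def
  have hkey : V ^ j = exp A ^ j * W ^ j := by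
    rw [hW_def, hcommVe.mul_pow]
    have hcomm2 : Commute (exp A ^ j) (V ^ j) :=
      (hcommVA.symm.exp_left).pow_pow j j
    have hcomm3 : Commute (exp A) (exp (-A)) := ((Commute.refl A).neg_right).exp
    rw [← mul_assoc, hcomm2.eq, mul_assoc, ← hcomm3.mul_pow, hexp1, one_pow, mul_one]
  have hone : ‖(1 : Matrix (Fin n) (Fin n) ℂ)‖ ≤ 1 := aux_norm_one n
  have hexp_pow : exp A ^ j = exp (((j:ℝ) * h) • L) := by
    rw [← Matrix.exp_nsmul]
    congr 1
    rw [hA_def, ← Nat.cast_smul_eq_nsmul ℝ j (h • L), smul_smul]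
  have hcont : Continuous fun t : ℝ => ‖exp (t • L)‖ := by
    letI : NormedAlgebra ℚ (Matrix (Fin n) (Fin n) ℂ) := NormedAlgebra.restrictScalars ℚ ℂ _
    exact (exp_continuous.comp (continuous_id.smul continuous_const)).norm
  have hbdd : BddAbove ((fun t : ℝ => ‖exp (t • L)‖) '' Set.Icc 0 T) :=
    (isCompact_Icc.image hcont).bddAbove
  have hCle : ∀ t ∈ Set.Icc (0:ℝ) T, ‖exp (t • L)‖ ≤ C := fun t ht =>
    hC ▸ le_csSup hbdd ⟨t, ht, rfl⟩
  have hT0 : 0 ≤ T := by rw [hT]; positivity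
  have hjh : (j:ℝ) * h ∈ Set.Icc (0:ℝ) T := by
    constructor
    · positivity
    · rw [hT]
      exact mul_le_mul_of_nonneg_right (by exact_mod_cast hjm) hh.le
  have hexpC : ‖exp A ^ j‖ ≤ C := by rw [hexp_pow]; exact hCle _ hjh
  have hC0 : 0 ≤ C := le_trans (norm_nonneg _) (hCle 0 ⟨le_refl 0, hT0⟩ |>.trans_eq (by simp))
  set δ : ℝ := Real.exp 1 ^ 2 / (k+1).factorial with hδ_def
  have hδ0 : 0 ≤ δ := by positivity
  have hrem := aux_remainder k A hA
  have hexpnegA : ‖exp (-A)‖ ≤ Real.exp 1 := aux_norm_exp (-A) (by simpa using hA)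
  have hD : ‖W - 1‖ ≤ δ := by
    have hWe : W - 1 = (V - exp A) * exp (-A) := by rw [hW_def, sub_mul, hexp1]
    rw [hWe]
    calc ‖(V - exp A) * exp (-A)‖ ≤ ‖V - exp A‖ * ‖exp (-A)‖ := norm_mul_le _ _
      _ ≤ (Real.exp 1 / (k+1).factorial) * Real.exp 1 := by
          refine mul_le_mul ?_ hexpnegA (norm_nonneg _) (by positivity)
          rw [norm_sub_rev]; exact hrem
      _ = δ := by rw [hδ_def]; ring
  have hWj : ‖W ^ j - 1‖ ≤ (1+δ)^j - 1 := by
    have h1 : W = 1 + (W - 1) := by abel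
    calc ‖W ^ j - 1‖ = ‖(1 + (W - 1)) ^ j - 1‖ := by rw [← h1]
      _ ≤ (1+δ)^j - 1 := aux_pow_one_add_sub_one hone (W-1) δ hδ0 hD j
  have hjδ : (j:ℝ) * δ ≤ 1 := by
    have h1 : (j:ℝ) * δ ≤ (m:ℝ) * δ := by
      have : (j:ℝ) ≤ (m:ℝ) := by exact_mod_cast hjm
      exact mul_le_mul_of_nonneg_right this hδ0
    have h2 : (m:ℝ) * δ = (m : ℝ) * Real.exp 1 ^ 2 / (k + 1).factorial := by
      rw [hδ_def]; ring
    linarith [h2 ▸ h1]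
  have hWj2 : ‖W ^ j - 1‖ ≤ (Real.exp 1 - 1) * ((j:ℝ) * δ) := by
    have h2 : (1+δ)^j ≤ Real.exp ((j:ℝ) * δ) := by
      calc (1+δ)^j ≤ (Real.exp δ)^j :=
            pow_le_pow_left₀ (by linarith) (by linarith [Real.add_one_le_exp δ]) j
        _ = Real.exp ((j:ℝ) * δ) := by rw [← Real.exp_nat_mul]
    have h3 := aux_exp_le ((j:ℝ) * δ) (by positivity) hjδ
    linarith
  have hWjn : ‖W ^ j‖ ≤ 1 + (Real.exp 1 - 1) * ((j:ℝ) * δ) := by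
    have h1 : W ^ j = 1 + (W ^ j - 1) := by abel
    calc ‖W ^ j‖ = ‖1 + (W ^ j - 1)‖ := by rw [← h1]
      _ ≤ ‖(1 : Matrix (Fin n) (Fin n) ℂ)‖ + ‖W ^ j - 1‖ := norm_add_le _ _
      _ ≤ 1 + (Real.exp 1 - 1) * ((j:ℝ) * δ) := add_le_add hone hWj2
  have he1 : (1:ℝ) ≤ Real.exp 1 := by linarith [Real.add_one_le_exp (1:ℝ)]
  have heq : C * (1 + (Real.exp 1 - 1) * ((j:ℝ) * δ)) =
      C * (1 + (Real.exp 1 - 1) * j * Real.exp 1 ^ 2 / (k + 1).factorial) := by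
    rw [hδ_def]; ring
  constructor
  · calc ‖V ^ j‖ = ‖exp A ^ j * W ^ j‖ := by rw [hkey]
      _ ≤ ‖exp A ^ j‖ * ‖W ^ j‖ := norm_mul_le _ _
      _ ≤ C * (1 + (Real.exp 1 - 1) * ((j:ℝ) * δ)) :=
          mul_le_mul hexpC hWjn (norm_nonneg _) hC0
      _ = _ := heq
  · rw [← heq]
    have h1 : (Real.exp 1 - 1) * ((j:ℝ) * δ) ≤ Real.exp 1 - 1 := by nlinarith
    nlinarith
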